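/- Let C be a minimum σ-τ edge cut in the q-T-fractal △_q, and let {x,y} be the unique edge of C lying on the outermost boundary B_q, where x lies in the connected component of σ in △_q − C. Then dist_{△_q − C}(σ, x) + dist_{△_q − C}(y, τ) = q. -/

import Mathlib

/-- Popcount. -/
def pc : ℕ → ℕ
  | 0 => 0
  | n+1 => pc ((n+1)/2) + (n+1) % 2
decreasing_by exact Nat.div_lt_self (Nat.succ_pos n) one_lt_two

lemma pc_zero : pc 0 = 0 := by rw [pc]

lemma pc_eq (n : ℕ) (h : n ≠ 0) : pc n = pc (n/2) + n % 2 := by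
  cases n with
  | zero => exact absurd rfl h
  | succ m => rw [pc]

lemma pc_two_mul (a : ℕ) : pc (2*a) = pc a := by
  cases a with
  | zero => rfl
  | succ b => rw [pc_eq (2*(b+1)) (by omega)]; simp [Nat.mul_div_cancel_left, Nat.mul_mod_right]

lemma pc_two_mul_add_one (a : ℕ) : pc (2*a+1) = pc a + 1 := by
  rw [pc_eq (2*a+1) (by omega)]
  have h1 : (2*a+1)/2 = a := by omega
  have h2 : (2*a+1) % 2 = 1 := by omega
  rw [h1, h2]

lemma pc_add_pow : ∀ k a, 2^(k+1) ∣ a → pc (a + 2^k) = pc a + 1 := by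
  intro k
  induction k with
  | zero =>
    intro a ha
    obtain ⟨b, rfl⟩ := ha
    rw [pow_one, pow_zero]
    rw [pc_two_mul_add_one, pc_two_mul]
  | succ k ih =>
    intro a ha
    obtain ⟨b, rfl⟩ := ha
    have h1 : 2^(k+1+1) * b + 2^(k+1) = 2 * (2^(k+1)*b + 2^k) := by ring
    have h2 : 2^(k+1+1) * b = 2 * (2^k * (2*b)) := by ring
    rw [h1, h2, pc_two_mul, pc_two_mul]
    have : 2^k * (2*b) = 2^(k+1)*b := by ring
    rw [show (2:ℕ)^(k+1)*b + 2^k = 2^k*(2*b) + 2^k by ring, this]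
    exact ih _ ⟨b, by ring⟩

lemma pc_pow_add : ∀ r s, s < 2^r → pc (2^r + s) = pc s + 1 := by
  intro r
  induction r with
  | zero => intro s hs; interval_cases s; rw [show (2:ℕ)^0+0 = 1 by norm_num, pc_eq 1 one_ne_zero]
  | succ r ih =>
    intro s hs
    rcases Nat.even_or_odd s with ⟨s', rfl⟩ | ⟨s', rfl⟩
    · have h1 : 2^(r+1) + (s'+s') = 2 * (2^r + s') := by ring
      rw [h1, pc_two_mul, show s'+s' = 2*s' by ring, pc_two_mul, ih s' (by omega)]
    · have h1 : 2^(r+1) + (2*s'+1) = 2 * (2^r + s') + 1 := by ring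
      rw [h1, pc_two_mul_add_one, pc_two_mul_add_one, ih s' (by omega)]

lemma pc_compl : ∀ q m, m < 2^q → pc m + pc (2^q - 1 - m) = q := by
  intro q
  induction q with
  | zero => intro m hm; interval_cases m; simp [pc_zero]
  | succ q ih =>
    intro m hm
    rcases lt_or_ge m (2^q) with h | h
    · have h1 : 2^(q+1) - 1 - m = 2^q + (2^q - 1 - m) := by
        have := Nat.one_le_two_pow (n := q); omega
      rw [h1, pc_pow_add q _ (by omega)]
      have := ih m h; omega
    · obtain ⟨s, rfl⟩ : ∃ s, m = 2^q + s := ⟨m - 2^q, by omega⟩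
      have hpq : (2:ℕ)^(q+1) = 2^q + 2^q := by ring
      have hs : s < 2^q := by omega
      rw [pc_pow_add q s hs]
      have h1 : 2^(q+1) - 1 - (2^q + s) = 2^q - 1 - s := by omega
      rw [h1]
      have := ih s hs; omega

lemma pc_eq_card : ∀ r m, m < 2^r → ((Finset.range r).filter (fun k => m.testBit k)).card = pc m := by
  intro r
  induction r with
  | zero => intro m hm; interval_cases m; simp [pc_zero]
  | succ r ih =>
    intro m hm
    rw [Finset.range_add_one, Finset.filter_insert]
    rcases lt_or_ge m (2^r) with h | h
    · rw [if_neg (by simp [Nat.testBit_lt_two_pow h]), ih m h]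
    · obtain ⟨s, rfl⟩ : ∃ s, m = 2^r + s := ⟨m - 2^r, by omega⟩
      have hpr : (2:ℕ)^(r+1) = 2^r + 2^r := by ring
      have hs : s < 2^r := by omega
      have htb : (2^r + s).testBit r = true := by
        rw [Nat.testBit_two_pow_add_eq, Nat.testBit_lt_two_pow hs]; rfl
      rw [if_pos (by simp [htb]), Finset.card_insert_of_notMem (by simp)]
      have hcong : (Finset.range r).filter (fun k => (2^r+s).testBit k)
          = (Finset.range r).filter (fun k => s.testBit k) := by
        apply Finset.filter_congr
        intro k hk
        rw [Finset.mem_range] at hk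
        rw [Nat.testBit_two_pow_add_gt hk]
      rw [hcong, ih s hs, pc_pow_add r s hs]

/-- The potential function used to lower bound distances. -/
def phi (q m n : ℕ) : ℕ :=
  ((Finset.range (q+1)).filter (fun k => m.testBit k ∧ 2^k * (m / 2^k) ≤ n)).card

lemma testBit_ge (m k : ℕ) (h : m.testBit k = true) : 2^k ≤ 2^k * (m / 2^k) := by
  have h1 : (m / 2^k) % 2 = 1 := by
    have := Nat.testBit_eq_decide_div_mod_eq (x := m) (i := k)
    rw [h] at this
    exact (of_decide_eq_true this.symm)
  have : 1 ≤ m / 2^k := Nat.pos_of_ne_zero (fun h0 => by rw [h0] at h1; simp at h1)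
  calc 2^k = 2^k * 1 := by ring
  _ ≤ 2^k * (m / 2^k) := Nat.mul_le_mul_left _ this

lemma not_two_dvd_div (m k : ℕ) (h : m.testBit k = true) : ¬ 2^(k+1) ∣ 2^k * (m / 2^k) := by
  have h1 : (m / 2^k) % 2 = 1 := by
    have := Nat.testBit_eq_decide_div_mod_eq (x := m) (i := k)
    rw [h] at this
    exact (of_decide_eq_true this.symm)
  rintro ⟨c, hc⟩
  have : 2^(k+1) = 2^k * 2 := by ring
  rw [this, mul_assoc] at hc
  have h2 : m / 2^k = 2 * c := Nat.eq_of_mul_eq_mul_left (Nat.two_pow_pos k) hc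
  rw [h2] at h1
  omega

lemma tk_prefix_mono (m k j : ℕ) (hkj : k ≤ j) : 2^j * (m / 2^j) ≤ 2^k * (m / 2^k) := by
  have h1 : m / 2^j = (m / 2^k) / 2^(j-k) := by
    rw [Nat.div_div_eq_div_mul, ← pow_add, Nat.add_sub_cancel' hkj]
  rw [h1, show (2:ℕ)^j = 2^k * 2^(j-k) by rw [← pow_add, Nat.add_sub_cancel' hkj], mul_assoc]
  exact Nat.mul_le_mul_left _ (by
    calc 2^(j-k) * (m / 2^k / 2^(j-k)) = (m / 2^k / 2^(j-k)) * 2^(j-k) := by ring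
    _ ≤ m / 2^k := Nat.div_mul_le_self _ _)

lemma phi_zero (q m : ℕ) : phi q m 0 = 0 := by
  rw [phi, Finset.card_eq_zero, Finset.filter_eq_empty_iff]
  rintro k - ⟨htb, hle⟩
  have := testBit_ge m k htb
  have := Nat.two_pow_pos k
  omega

lemma phi_self (q m : ℕ) (hm : m < 2^(q+1)) : phi q m m = pc m := by
  rw [phi, ← pc_eq_card (q+1) m hm]
  congr 1
  apply Finset.filter_congr
  rintro k -
  constructor
  · rintro ⟨h, -⟩; simpa using h
  · intro h
    refine ⟨by simpa using h, ?_⟩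
    calc 2^k * (m / 2^k) = (m / 2^k) * 2^k := by ring
    _ ≤ m := Nat.div_mul_le_self _ _

lemma phi_mono (q m n n' : ℕ) (h : n ≤ n') : phi q m n ≤ phi q m n' := by
  apply Finset.card_le_card
  intro k hk
  simp only [Finset.mem_filter] at hk ⊢
  exact ⟨hk.1, hk.2.1, le_trans hk.2.2 h⟩

lemma phi_lip (q m a j : ℕ) (hdvd : 2^j ∣ a) (hle : a + 2^j ≤ m) :
    phi q m (a + 2^j) ≤ phi q m a + 1 := by
  classical
  set P1 := fun k => m.testBit k ∧ 2^k * (m / 2^k) ≤ a with hP1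
  set P2 := fun k => m.testBit k ∧ 2^k * (m / 2^k) ≤ a + 2^j with hP2
  set S1 := (Finset.range (q+1)).filter P1 with hS1
  set S2 := (Finset.range (q+1)).filter P2 with hS2
  have hsub : S1 ⊆ S2 := by
    intro k hk
    simp only [hS1, hS2, Finset.mem_filter, hP1, hP2] at hk ⊢
    exact ⟨hk.1, hk.2.1, by omega⟩
  -- every element of S2 \ S1 has t_k = a + 2^j and is the 2-adic valuation of a+2^j
  have hkey : ∀ k, m.testBit k = true → a < 2^k * (m / 2^k) → 2^k * (m / 2^k) ≤ a + 2^j →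
      2^k * (m / 2^k) = a + 2^j ∧ j ≤ k := by
    intro k htb hlt hle2
    have htj : a + 2^j ≤ 2^j * (m / 2^j) := by
      obtain ⟨c, rfl⟩ := hdvd
      have : c + 1 ≤ m / 2^j := by
        rw [Nat.le_div_iff_mul_le (Nat.two_pow_pos j)]
        calc (c+1) * 2^j = 2^j * c + 2^j := by ring
        _ ≤ m := hle
      calc 2^j * c + 2^j = 2^j * (c+1) := by ring
      _ ≤ 2^j * (m / 2^j) := Nat.mul_le_mul_left _ this
    have hjk : j ≤ k := by
      by_contra hkj
      push_neg at hkj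
      have h1 : a + 2^j ≤ 2^k * (m / 2^k) := le_trans htj (tk_prefix_mono m k j (by omega))
      have heq : 2^k * (m / 2^k) = a + 2^j := by omega
      have hdd : 2^(k+1) ∣ 2^k * (m / 2^k) := by
        rw [heq]
        exact dvd_add (dvd_trans (pow_dvd_pow 2 (by omega)) hdvd)
          (pow_dvd_pow 2 (by omega))
      exact not_two_dvd_div m k htb hdd
    have hdd : 2^j ∣ 2^k * (m / 2^k) := dvd_mul_of_dvd_left (pow_dvd_pow 2 hjk) _
    obtain ⟨c0, hc0⟩ := hdvd
    obtain ⟨c1, hc1⟩ := hdd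
    have hpos := Nat.two_pow_pos j
    have hcc : c0 < c1 ∧ c1 ≤ c0 + 1 := by
      constructor
      · have : 2^j * c0 < 2^j * c1 := by omega
        exact Nat.lt_of_mul_lt_mul_left this
      · have : 2^j * c1 ≤ 2^j * (c0 + 1) := by
          calc 2^j * c1 = 2^k * (m/2^k) := hc1.symm
          _ ≤ a + 2^j := hle2
          _ = 2^j * (c0+1) := by rw [hc0]; ring
        exact Nat.le_of_mul_le_mul_left this hpos
    have : c1 = c0 + 1 := by omega
    constructor
    · rw [hc1, this, hc0]; ring
    · exact hjk
  have hdiff : (S2 \ S1).card ≤ 1 := by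
    rw [Finset.card_le_one]
    intro k1 hk1 k2 hk2
    rw [Finset.mem_sdiff] at hk1 hk2
    obtain ⟨hm1, hn1⟩ := hk1
    obtain ⟨hm2, hn2⟩ := hk2
    rw [hS2, Finset.mem_filter, hP2] at hm1 hm2
    obtain ⟨hr1, htb1, hle1⟩ := hm1
    obtain ⟨hr2, htb2, hle2⟩ := hm2
    have hgt1 : a < 2^k1 * (m/2^k1) := by
      by_contra hcon; push_neg at hcon
      exact hn1 (by rw [hS1, Finset.mem_filter, hP1]; exact ⟨hr1, htb1, hcon⟩)
    have hgt2 : a < 2^k2 * (m/2^k2) := by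
      by_contra hcon; push_neg at hcon
      exact hn2 (by rw [hS1, Finset.mem_filter, hP1]; exact ⟨hr2, htb2, hcon⟩)
    have h1 := hkey k1 htb1 hgt1 hle1
    have h2 := hkey k2 htb2 hgt2 hle2
    by_contra hne
    rcases Nat.lt_or_ge k1 k2 with hlt | hge
    · apply not_two_dvd_div m k1 htb1
      rw [h1.1, ← h2.1]
      exact dvd_mul_of_dvd_left (pow_dvd_pow 2 (by omega)) _
    · have hlt : k2 < k1 := by omega
      apply not_two_dvd_div m k2 htb2
      rw [h2.1, ← h1.1]
      exact dvd_mul_of_dvd_left (pow_dvd_pow 2 (by omega)) _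
  have h1 : (S2 \ S1).card = S2.card - S1.card := Finset.card_sdiff_of_subset hsub
  have h2 : S1.card ≤ S2.card := Finset.card_le_card hsub
  show S2.card ≤ S1.card + 1
  omega



/-- Auxiliary adjacency: `b = a + 2^(q-i)` for some `i ≤ q` with `2^(q-i) ∣ a`.
These are exactly the (directed versions of the) edges of the `q`-T-fractal,
where the boundary `B_i` consists of the edges at scale `2^(q-i)`. -/
def fracAdjAux (q a b : ℕ) : Prop :=
  ∃ i ≤ q, 2 ^ (q - i) ∣ a ∧ b = a + 2 ^ (q - i)

/-- The `q`-T-fractal, realized on the vertex set `{0, 1, …, 2^q}` (the vertices of the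
outermost boundary path): the left copy of `△_{q-1}` lives on `{0,…,2^{q-1}}`, the right
copy on `{2^{q-1},…,2^q}`, and `{0, 2^q}` is the extra edge; `σ = 0` and `τ = 2^q`. -/
def TFractal (q : ℕ) : SimpleGraph (Fin (2 ^ q + 1)) where
  Adj a b := fracAdjAux q a.val b.val ∨ fracAdjAux q b.val a.val
  symm := ⟨fun _ _ h => Or.symm h⟩
  loopless := by
    refine ⟨fun a h => ?_⟩
    rcases h with ⟨i, _, _, h⟩ | ⟨i, _, _, h⟩ <;>
      · have := Nat.two_pow_pos (q - i)
        omega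

/-- The special vertex `σ` of the `q`-T-fractal. -/
def sigV (q : ℕ) : Fin (2 ^ q + 1) := ⟨0, Nat.succ_pos _⟩

/-- The special vertex `τ` of the `q`-T-fractal. -/
def tauV (q : ℕ) : Fin (2 ^ q + 1) := ⟨2 ^ q, Nat.lt_succ_self _⟩

/-- The boundary `B_i` of the `q`-T-fractal: the edges created in round `i`,
i.e. the edges `{a, a + 2^(q-i)}` with `2^(q-i) ∣ a`. -/
def boundaryB (q i : ℕ) : Set (Sym2 (Fin (2 ^ q + 1))) :=
  { e | ∃ a b : Fin (2 ^ q + 1),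
      e = s(a, b) ∧ 2 ^ (q - i) ∣ a.val ∧ b.val = a.val + 2 ^ (q - i) }

/-- `C` is a `σ`-`τ` edge cut in the `q`-T-fractal. -/
def IsSTCut (q : ℕ) (C : Set (Sym2 (Fin (2 ^ q + 1)))) : Prop :=
  ¬ ((TFractal q).deleteEdges C).Reachable (sigV q) (tauV q)

/-- `C` is a minimum `σ`-`τ` edge cut in the `q`-T-fractal. -/
def MinSTCut (q : ℕ) (C : Set (Sym2 (Fin (2 ^ q + 1)))) : Prop :=
  C ⊆ (TFractal q).edgeSet ∧ IsSTCut q C ∧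
    ∀ C' ⊆ (TFractal q).edgeSet, IsSTCut q C' → C.ncard ≤ C'.ncard

-- basic adjacency constructor
lemma tf_adj (q : ℕ) (a b : Fin (2^q+1)) (j : ℕ) (hj : j ≤ q) (hdvd : 2^j ∣ a.val)
    (hb : b.val = a.val + 2^j) : (TFractal q).Adj a b :=
  Or.inl ⟨q - j, Nat.sub_le _ _, by rw [Nat.sub_sub_self hj]; exact hdvd,
    by rw [Nat.sub_sub_self hj]; exact hb⟩

/-- The canonical minimum cut at position `m`. -/
def cutSet (q m : ℕ) : Set (Sym2 (Fin (2^q+1))) :=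
  { e | ∃ j ≤ q, ∃ a b : Fin (2^q+1),
      e = s(a,b) ∧ a.val = 2^j * (m / 2^j) ∧ b.val = a.val + 2^j }

lemma vlo_le (m j : ℕ) : 2^j * (m / 2^j) ≤ m := by
  calc 2^j * (m / 2^j) = (m / 2^j) * 2^j := by ring
  _ ≤ m := Nat.div_mul_le_self _ _

lemma lt_vlo_add (m j : ℕ) : m < 2^j * (m / 2^j) + 2^j := by
  have h1 := Nat.div_add_mod m (2^j)
  have h2 := Nat.mod_lt m (Nat.two_pow_pos j)
  omega

lemma vlo_add_le (q m j : ℕ) (hj : j ≤ q) (hm : m < 2^q) : 2^j * (m / 2^j) + 2^j ≤ 2^q := by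
  have h1 : m / 2^j < 2^(q-j) := by
    rw [Nat.div_lt_iff_lt_mul (Nat.two_pow_pos j)]
    calc m < 2^q := hm
    _ = 2^(q-j) * 2^j := by rw [← pow_add]; congr 1; omega
  calc 2^j * (m / 2^j) + 2^j = 2^j * (m / 2^j + 1) := by ring
  _ ≤ 2^j * 2^(q-j) := Nat.mul_le_mul_left _ h1
  _ = 2^q := by rw [← pow_add]; congr 1; omega

/-- An edge that crosses `m` must have its lower endpoint at `2^j * (m / 2^j)`. -/
lemma cross_eq_vlo (m a j : ℕ) (hdvd : 2^j ∣ a) (h1 : a ≤ m) (h2 : m < a + 2^j) :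
    a = 2^j * (m / 2^j) := by
  obtain ⟨c, rfl⟩ := hdvd
  have : m / 2^j = c := by
    apply Nat.div_eq_of_lt_le
    · calc c * 2^j = 2^j * c := by ring
      _ ≤ m := h1
    · calc m < 2^j * c + 2^j := h2
      _ = (c+1) * 2^j := by ring
  rw [this]

/-- Single step invariant: from a vertex `≤ m` one stays `≤ m` if all crossing edges
are in the deleted set `D`. -/
lemma step_le (q m : ℕ) (D : Set (Sym2 (Fin (2^q+1)))) (hD : cutSet q m ⊆ D)
    {u v : Fin (2^q+1)} (hadj : ((TFractal q).deleteEdges D).Adj u v) (hu : u.val ≤ m) :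
    v.val ≤ m := by
  rw [SimpleGraph.deleteEdges_adj] at hadj
  obtain ⟨hadj, hnot⟩ := hadj
  by_contra hv
  push_neg at hv
  rcases hadj with ⟨i, hi, hdvd, hb⟩ | ⟨i, hi, hdvd, hb⟩
  · -- v = u + 2^(q-i), crossing
    apply hnot
    apply hD
    refine ⟨q - i, Nat.sub_le _ _, u, v, rfl, ?_, hb⟩
    exact cross_eq_vlo m u.val (q-i) hdvd hu (by omega)
  · -- u = v + 2^(q-i) : v < u ≤ m, contradiction with hv
    have := Nat.two_pow_pos (q - i)
    omega

lemma reach_le (q m : ℕ) (D : Set (Sym2 (Fin (2^q+1)))) (hD : cutSet q m ⊆ D)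
    {u v : Fin (2^q+1)} (h : ((TFractal q).deleteEdges D).Reachable u v)
    (hu : u.val ≤ m) : v.val ≤ m := by
  obtain ⟨w⟩ := h
  induction w with
  | nil => exact hu
  | cons hadj p ih => exact ih (step_le q m D hD hadj hu)

lemma cutSet_subset_edgeSet (q m : ℕ) : cutSet q m ⊆ (TFractal q).edgeSet := by
  rintro e ⟨j, hj, a, b, rfl, ha, hb⟩
  rw [SimpleGraph.mem_edgeSet]
  exact tf_adj q a b j hj (ha ▸ dvd_mul_right _ _) hb

lemma cutSet_isSTCut (q m : ℕ) (hm : m < 2^q) : IsSTCut q (cutSet q m) := by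
  intro h
  have := reach_le q m (cutSet q m) (le_refl _) h (by simp [sigV])
  simp only [tauV] at this
  omega

lemma cutSet_ncard (q m : ℕ) (hm : m < 2^q) : (cutSet q m).ncard = q + 1 := by
  classical
  have hle : ∀ j, j ≤ q → 2^j * (m / 2^j) + 2^j ≤ 2^q := fun j hj => vlo_add_le q m j hj hm
  set g : ℕ → Sym2 (Fin (2^q+1)) := fun j =>
    s((⟨min (2^j * (m / 2^j)) (2^q), by omega⟩ : Fin (2^q+1)),
      (⟨min (2^j * (m / 2^j) + 2^j) (2^q), by omega⟩ : Fin (2^q+1))) with hg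
  have hval : ∀ j, j ≤ q → (min (2^j * (m / 2^j)) (2^q)) = 2^j * (m / 2^j) ∧
      (min (2^j * (m / 2^j) + 2^j) (2^q)) = 2^j * (m / 2^j) + 2^j := by
    intro j hj
    have := hle j hj
    have := Nat.two_pow_pos j
    constructor <;> omega
  have himg : cutSet q m = g '' (Set.Iic q) := by
    ext e
    constructor
    · rintro ⟨j, hj, a, b, rfl, ha, hb⟩
      obtain ⟨h1, h2⟩ := hval j hj
      have haa : a = (⟨min (2^j * (m / 2^j)) (2^q), by omega⟩ : Fin (2^q+1)) :=
        Fin.ext (by simp [h1, ha])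
      have hbb : b = (⟨min (2^j * (m / 2^j) + 2^j) (2^q), by omega⟩ : Fin (2^q+1)) :=
        Fin.ext (by simp [h2, ha, hb])
      exact ⟨j, hj, by simp only [hg]; exact (congrArg₂ (fun u v => s(u,v)) haa hbb).symm⟩
    · rintro ⟨j, hj, rfl⟩
      simp only [Set.mem_Iic] at hj
      obtain ⟨h1, h2⟩ := hval j hj
      exact ⟨j, hj, _, _, rfl, by simp [h1], by simp [h1, h2]⟩
  have hinj : Set.InjOn g (Set.Iic q) := by
    intro j1 h1 j2 h2 heq
    simp only [Set.mem_Iic] at h1 h2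
    obtain ⟨ha1, hb1⟩ := hval j1 h1
    obtain ⟨ha2, hb2⟩ := hval j2 h2
    rw [hg] at heq
    simp only [Sym2.eq_iff] at heq
    have hp1 := Nat.two_pow_pos j1
    have hp2 := Nat.two_pow_pos j2
    rcases heq with ⟨e1, e2⟩ | ⟨e1, e2⟩
    · have v1 := congrArg Fin.val e1
      have v2 := congrArg Fin.val e2
      simp only [ha1, ha2, hb1, hb2] at v1 v2
      have : (2:ℕ)^j1 = 2^j2 := by omega
      exact Nat.pow_right_injective (le_refl 2) this
    · have v1 := congrArg Fin.val e1
      have v2 := congrArg Fin.val e2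
      simp only [ha1, ha2, hb1, hb2] at v1 v2
      omega
  rw [himg, Set.ncard_image_of_injOn hinj, ← Finset.coe_Iic, Set.ncard_coe_finset,
    Nat.card_Iic]

/-- Chain of `+1` edges: if no unit edge between `c` and `d` is deleted, then
`c` and `d` are connected. -/
lemma chain (q : ℕ) (D : Set (Sym2 (Fin (2^q+1)))) (c d : ℕ) (hcd : c ≤ d) (hd : d ≤ 2^q)
    (h : ∀ t (h1 : c ≤ t) (h2 : t < d),
      s((⟨t, by omega⟩ : Fin (2^q+1)), (⟨t+1, by omega⟩ : Fin (2^q+1))) ∉ D) :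
    ((TFractal q).deleteEdges D).Reachable ⟨c, by omega⟩ ⟨d, by omega⟩ := by
  induction d with
  | zero =>
    have : c = 0 := by omega
    subst this
    rfl
  | succ d ih =>
    rcases Nat.lt_or_ge c (d+1) with hlt | hge
    · have hcd' : c ≤ d := by omega
      have hd' : d ≤ 2^q := by omega
      have hreach := ih hcd' hd' (fun t h1 h2 => h t h1 (by omega))
      apply hreach.trans
      apply SimpleGraph.Adj.reachable
      rw [SimpleGraph.deleteEdges_adj]
      exact ⟨tf_adj q _ _ 0 (Nat.zero_le _) (one_dvd _) (by simp), h d hcd' (by omega)⟩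
    · have : c = d + 1 := by omega
      subst this
      rfl

/-- Every boundary must meet every st-cut. -/
lemma boundary_meets (q i : ℕ) (hi : i ≤ q) (D : Set (Sym2 (Fin (2^q+1))))
    (hcut : IsSTCut q D) : ∃ e ∈ D, e ∈ boundaryB q i := by
  by_contra hmiss
  push_neg at hmiss
  apply hcut
  have hpow : 2^i * 2^(q-i) = 2^q := by rw [← pow_add]; congr 1; omega
  have key : ∀ c (hc : c ≤ 2^i) (v : Fin (2^q+1)), v.val = c * 2^(q-i) →
      ((TFractal q).deleteEdges D).Reachable (sigV q) v := by
    intro c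
    induction c with
    | zero =>
      intro _ v hv
      have : v = sigV q := Fin.ext (by simp [sigV, hv])
      rw [this]
    | succ c ih =>
      intro hc v hv
      have hub : c * 2^(q-i) ≤ 2^i * 2^(q-i) := Nat.mul_le_mul_right _ (by omega)
      have hu : c * 2^(q-i) < 2^q + 1 := by omega
      have hreach := ih (by omega) ⟨c * 2^(q-i), hu⟩ rfl
      apply hreach.trans
      apply SimpleGraph.Adj.reachable
      rw [SimpleGraph.deleteEdges_adj]
      constructor
      · exact tf_adj q _ _ (q-i) (Nat.sub_le _ _) ⟨c, by simp [mul_comm]⟩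
          (by simp [hv]; ring)
      · intro hmem
        refine hmiss _ hmem ⟨_, _, rfl, ⟨c, by simp [mul_comm]⟩, by simp [hv]; ring⟩
  exact key (2^i) (le_refl _) (tauV q) (by simp [tauV, hpow])

lemma bdisj (q i j : ℕ) (hi : i ≤ q) (hj : j ≤ q) (e : Sym2 (Fin (2^q+1)))
    (hei : e ∈ boundaryB q i) (hej : e ∈ boundaryB q j) : i = j := by
  obtain ⟨a, b, rfl, hda, hb⟩ := hei
  obtain ⟨a', b', he, hda', hb'⟩ := hej
  rw [Sym2.eq_iff] at he
  have hp1 := Nat.two_pow_pos (q - i)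
  have hp2 := Nat.two_pow_pos (q - j)
  rcases he with ⟨e1, e2⟩ | ⟨e1, e2⟩
  · have v1 := congrArg Fin.val e1
    have v2 := congrArg Fin.val e2
    have : (2:ℕ)^(q-i) = 2^(q-j) := by omega
    have := Nat.pow_right_injective (le_refl 2) this
    omega
  · have v1 := congrArg Fin.val e1
    have v2 := congrArg Fin.val e2
    omega

lemma sxy_mem_Bq (q : ℕ) (a b : Fin (2^q+1)) (hb : b.val = a.val + 1) :
    s(a,b) ∈ boundaryB q q :=
  ⟨a, b, rfl, by simp, by simpa using hb⟩

lemma minCut_eq_cutSet (q : ℕ) (C : Set (Sym2 (Fin (2^q+1)))) (hC : MinSTCut q C)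
    (a b : Fin (2^q+1)) (hab : s(a,b) ∈ C) (hb : b.val = a.val + 1) :
    C = cutSet q a.val := by
  classical
  set m := a.val with hmdef
  have hm : m < 2^q := by have := b.isLt; omega
  have hex : ∀ i, i ≤ q → ∃ e, e ∈ C ∧ e ∈ boundaryB q i :=
    fun i hi => by
      obtain ⟨e, h1, h2⟩ := boundary_meets q i hi C hC.2.1
      exact ⟨e, h1, h2⟩
  set f : ℕ → Sym2 (Fin (2^q+1)) := fun i =>
    if h : i ≤ q then (hex i h).choose else s(sigV q, sigV q) with hf
  have hfC : ∀ i, i ≤ q → f i ∈ C := fun i hi => by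
    simp only [hf, dif_pos hi]; exact (hex i hi).choose_spec.1
  have hfB : ∀ i, i ≤ q → f i ∈ boundaryB q i := fun i hi => by
    simp only [hf, dif_pos hi]; exact (hex i hi).choose_spec.2
  have himg_sub : f '' Set.Iic q ⊆ C := by
    rintro e ⟨i, hi, rfl⟩
    exact hfC i hi
  have hinj : Set.InjOn f (Set.Iic q) := by
    intro i hi j hj heq
    exact bdisj q i j hi hj (f i) (hfB i hi) (heq ▸ hfB j hj)
  have himgcard : (f '' Set.Iic q).ncard = q + 1 := by
    rw [Set.ncard_image_of_injOn hinj, ← Finset.coe_Iic, Set.ncard_coe_finset, Nat.card_Iic]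
  have hCn2 : C.ncard ≤ q + 1 := by
    have := hC.2.2 (cutSet q m) (cutSet_subset_edgeSet q m) (cutSet_isSTCut q m hm)
    rwa [cutSet_ncard q m hm] at this
  have hCeq : C = f '' Set.Iic q :=
    (Set.eq_of_subset_of_ncard_le himg_sub (by omega) (Set.toFinite C)).symm
  have hBq_unique : ∀ e, e ∈ C → e ∈ boundaryB q q → e = s(a,b) := by
    intro e heC heB
    obtain ⟨i, hi, rfl⟩ := hCeq ▸ heC
    rw [Set.mem_Iic] at hi
    have h1 : i = q := bdisj q i q hi (le_refl q) (f i) (hfB i hi) heB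
    obtain ⟨i', hi', he'⟩ := hCeq ▸ hab
    rw [Set.mem_Iic] at hi'
    have h2 : i' = q := bdisj q i' q hi' (le_refl q) (f i')
      (hfB i' hi') (he' ▸ sxy_mem_Bq q a b hb)
    subst h1; subst h2; exact he'
  -- unit edges away from m are not in C
  have hunit : ∀ t (h1 : t + 1 ≤ 2^q), t ≠ m →
      s((⟨t, by omega⟩ : Fin (2^q+1)), (⟨t+1, by omega⟩ : Fin (2^q+1))) ∉ C := by
    intro t h1 htm hmem
    have hB : s((⟨t, by omega⟩ : Fin (2^q+1)), (⟨t+1, by omega⟩ : Fin (2^q+1)))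
        ∈ boundaryB q q := sxy_mem_Bq q _ _ (by simp)
    have := hBq_unique _ hmem hB
    rw [Sym2.eq_iff] at this
    rcases this with ⟨e1, e2⟩ | ⟨e1, e2⟩
    · have := congrArg Fin.val e1
      simp [← hmdef] at this
      omega
    · have v1 := congrArg Fin.val e1
      have v2 := congrArg Fin.val e2
      simp [← hmdef] at v1 v2
      omega
  have hsub2 : cutSet q m ⊆ C := by
    rintro e ⟨j, hj, u, v, rfl, hu, hv⟩
    by_contra henC
    apply hC.2.1
    have hum : u.val ≤ m := hu ▸ vlo_le m j
    have hvm : m < v.val := by rw [hv, hu]; exact lt_vlo_add m j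
    have huq : u.val ≤ 2^q := by omega
    have hvq : v.val ≤ 2^q := by have := v.isLt; omega
    have r1 : ((TFractal q).deleteEdges C).Reachable ⟨0, by omega⟩ ⟨u.val, by omega⟩ :=
      chain q C 0 u.val (Nat.zero_le _) huq
        (fun t ht1 ht2 => hunit t (by omega) (by omega))
    have r2 : ((TFractal q).deleteEdges C).Reachable ⟨v.val, by omega⟩ ⟨2^q, by omega⟩ :=
      chain q C v.val (2^q) hvq (le_refl _)
        (fun t ht1 ht2 => hunit t (by omega) (by omega))
    have hadj : ((TFractal q).deleteEdges C).Adj u v := by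
      rw [SimpleGraph.deleteEdges_adj]
      exact ⟨tf_adj q u v j hj (hu ▸ dvd_mul_right _ _) hv, henC⟩
    have e1 : (⟨0, by omega⟩ : Fin (2^q+1)) = sigV q := Fin.ext (by simp [sigV])
    have e2 : (⟨u.val, by omega⟩ : Fin (2^q+1)) = u := Fin.ext rfl
    have e3 : (⟨v.val, by omega⟩ : Fin (2^q+1)) = v := Fin.ext rfl
    have e4 : (⟨2^q, by omega⟩ : Fin (2^q+1)) = tauV q := Fin.ext (by simp [tauV])
    rw [e1, e2] at r1
    rw [e3, e4] at r2
    exact (r1.trans (hadj.reachable)).trans r2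
  exact (Set.eq_of_subset_of_ncard_le hsub2
    (by rw [cutSet_ncard q m hm]; exact hCn2) (Set.toFinite C)).symm

lemma unit_not_cut_low (q m n' n : ℕ) (k : ℕ) (hn : n ≤ m) (hn' : n' < n)
    (h1 : n < 2^q+1) (h2 : n' < 2^q+1) :
    s((⟨n', h2⟩ : Fin (2^q+1)), (⟨n, h1⟩ : Fin (2^q+1))) ∉ cutSet q m := by
  rintro ⟨j, hj, u, v, he, hu, hv⟩
  rw [Sym2.eq_iff] at he
  have hvm : m < v.val := by rw [hv, hu]; exact lt_vlo_add m j
  rcases he with ⟨e1, e2⟩ | ⟨e1, e2⟩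
  · have := congrArg Fin.val e2; simp at this; omega
  · have w1 := congrArg Fin.val e1
    have w2 := congrArg Fin.val e2
    simp at w1 w2
    have := Nat.two_pow_pos j
    omega

lemma not_cut_high (q m n n' : ℕ) (hn : m + 1 ≤ n) (hn' : n < n')
    (h1 : n < 2^q+1) (h2 : n' < 2^q+1) :
    s((⟨n, h1⟩ : Fin (2^q+1)), (⟨n', h2⟩ : Fin (2^q+1))) ∉ cutSet q m := by
  rintro ⟨j, hj, u, v, he, hu, hv⟩
  rw [Sym2.eq_iff] at he
  have hum : u.val ≤ m := hu ▸ vlo_le m j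
  rcases he with ⟨e1, e2⟩ | ⟨e1, e2⟩
  · have := congrArg Fin.val e1; simp at this; omega
  · have w1 := congrArg Fin.val e1
    have w2 := congrArg Fin.val e2
    simp at w1 w2
    have := Nat.two_pow_pos j
    omega

lemma walk_left (q m : ℕ) (hm : m < 2^q) :
    ∀ n, ∀ hn : n ≤ m, ∃ w : ((TFractal q).deleteEdges (cutSet q m)).Walk (sigV q)
      ⟨n, by omega⟩, w.length = pc n := by
  intro n
  induction n using Nat.strong_induction_on with
  | _ n ih =>
    intro hn
    rcases Nat.eq_zero_or_pos n with rfl | hpos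
    · exact ⟨SimpleGraph.Walk.nil, pc_zero.symm⟩
    · obtain ⟨k, mm, hodd, rfl⟩ := Nat.exists_eq_two_pow_mul_odd hpos.ne'
      obtain ⟨c, rfl⟩ := hodd
      have hkpos := Nat.two_pow_pos k
      have hnval : 2^k * (2*c+1) = 2^(k+1) * c + 2^k := by ring
      set n' := 2^(k+1) * c with hn'def
      have hlt : n' < 2^k * (2*c+1) := by omega
      have hkq : k ≤ q := by
        have h1 : 2^k ≤ 2^q := by omega
        exact (Nat.pow_le_pow_iff_right (le_refl 2)).1 h1
      obtain ⟨w', hw'⟩ := ih n' hlt (by omega)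
      have hadj : ((TFractal q).deleteEdges (cutSet q m)).Adj
          ⟨n', by omega⟩ ⟨2^k * (2*c+1), by omega⟩ := by
        rw [SimpleGraph.deleteEdges_adj]
        constructor
        · exact tf_adj q _ _ k hkq ⟨2*c, by simp [hn'def]; ring⟩ (by simp [hnval])
        · exact unit_not_cut_low q m n' _ k hn hlt _ _
      refine ⟨w'.concat hadj, ?_⟩
      rw [SimpleGraph.Walk.length_concat, hw', hnval, pc_add_pow k n' ⟨c, rfl⟩]

lemma walk_right (q m : ℕ) (hm : m < 2^q) :
    ∀ d n, 2^q - n = d → m + 1 ≤ n → ∀ hn : n ≤ 2^q,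
      ∃ w : ((TFractal q).deleteEdges (cutSet q m)).Walk ⟨n, by omega⟩ (tauV q),
        w.length = pc d := by
  intro d
  induction d using Nat.strong_induction_on with
  | _ d ih =>
    intro n hd hmn hn
    rcases Nat.eq_zero_or_pos d with rfl | hpos
    · have : n = 2^q := by omega
      subst this
      exact ⟨SimpleGraph.Walk.nil, pc_zero.symm⟩
    · obtain ⟨k, mm, hodd, hdval⟩ := Nat.exists_eq_two_pow_mul_odd hpos.ne'
      obtain ⟨c, rfl⟩ := hodd
      have hkpos := Nat.two_pow_pos k
      have hd2 : d = 2^(k+1) * c + 2^k := by rw [hdval]; ring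
      set d' := 2^(k+1) * c with hd'def
      have hdlt : d' < d := by omega
      have hkq : k ≤ q := by
        have h1 : 2^k ≤ 2^q := by omega
        exact (Nat.pow_le_pow_iff_right (le_refl 2)).1 h1
      have hdvdn : 2^k ∣ n := by
        have h1 : 2^k ∣ 2^q := pow_dvd_pow 2 hkq
        have h2 : 2^k ∣ d := by rw [hd2]; exact dvd_add (Dvd.dvd.mul_right ⟨2, by ring⟩ c) dvd_rfl
        have : n = 2^q - d := by omega
        rw [this]
        exact Nat.dvd_sub h1 h2
      obtain ⟨w', hw'⟩ := ih d' hdlt (n + 2^k) (by omega) (by omega) (by omega)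
      have hadj : ((TFractal q).deleteEdges (cutSet q m)).Adj
          ⟨n, by omega⟩ ⟨n + 2^k, by omega⟩ := by
        rw [SimpleGraph.deleteEdges_adj]
        constructor
        · exact tf_adj q _ _ k hkq hdvdn (by simp)
        · exact not_cut_high q m n (n + 2^k) hmn (by omega) _ _
      refine ⟨SimpleGraph.Walk.cons hadj w', ?_⟩
      rw [SimpleGraph.Walk.length_cons, hw']
      have : d = d' + 2^k := by omega
      rw [this, pc_add_pow k d' ⟨c, rfl⟩]

lemma phi_walk_le (q m : ℕ) {u v : Fin (2^q+1)}
    (w : ((TFractal q).deleteEdges (cutSet q m)).Walk u v) :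
    u.val ≤ m → phi q m v.val ≤ phi q m u.val + w.length := by
  induction w with
  | nil => intro _; simp
  | @cons u u' v hadj p ih =>
    intro hu
    have hu' : u'.val ≤ m := step_le q m _ (le_refl _) hadj hu
    have hstep : phi q m u'.val ≤ phi q m u.val + 1 := by
      rw [SimpleGraph.deleteEdges_adj] at hadj
      rcases hadj.1 with ⟨i, hi, hdvd, hb⟩ | ⟨i, hi, hdvd, hb⟩
      · rw [hb]
        exact phi_lip q m u.val (q-i) hdvd (by omega)
      · have := phi_mono q m u'.val u.val (by
          have := Nat.two_pow_pos (q-i); omega)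
        omega
    have := ih hu'
    rw [SimpleGraph.Walk.length_cons]
    omega

lemma psi_walk_le (q m : ℕ) (hm : m < 2^q) {u v : Fin (2^q+1)}
    (w : ((TFractal q).deleteEdges (cutSet q m)).Walk u v) :
    m + 1 ≤ u.val → phi q (2^q - 1 - m) (2^q - u.val) ≤
      phi q (2^q - 1 - m) (2^q - v.val) + w.length := by
  induction w with
  | nil => intro _; simp
  | @cons u u' v hadj p ih =>
    intro hu
    rw [SimpleGraph.deleteEdges_adj] at hadj
    have huq := u.isLt
    have hu'q := u'.isLt
    have hu' : m + 1 ≤ u'.val := by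
      by_contra hcon
      push_neg at hcon
      rcases hadj.1 with ⟨i, hi, hdvd, hb⟩ | ⟨i, hi, hdvd, hb⟩
      · have := Nat.two_pow_pos (q-i); omega
      · apply hadj.2
        have hcross : u'.val = 2^(q-i) * (m / 2^(q-i)) :=
          cross_eq_vlo m u'.val (q-i) hdvd (by omega) (by omega)
        rw [Sym2.eq_swap]
        exact ⟨q - i, Nat.sub_le _ _, u', u, rfl, hcross, hb⟩
    have hstep : phi q (2^q - 1 - m) (2^q - u.val) ≤
        phi q (2^q - 1 - m) (2^q - u'.val) + 1 := by
      rcases hadj.1 with ⟨i, hi, hdvd, hb⟩ | ⟨i, hi, hdvd, hb⟩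
      · -- u' = u + 2^(q-i) : reflected, a := 2^q - u'.val
        have hdvda : 2^(q-i) ∣ 2^q - u'.val := by
          apply Nat.dvd_sub (pow_dvd_pow 2 (Nat.sub_le _ _))
          rw [hb]; exact dvd_add hdvd dvd_rfl
        have heq : 2^q - u.val = (2^q - u'.val) + 2^(q-i) := by omega
        rw [heq]
        exact phi_lip q (2^q-1-m) _ (q-i) hdvda (by omega)
      · have := phi_mono q (2^q-1-m) (2^q - u.val) (2^q - u'.val) (by
          have := Nat.two_pow_pos (q-i); omega)
        omega
    have := ih hu'
    rw [SimpleGraph.Walk.length_cons]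
    omega


/-- if `C` is a minimum `σ`-`τ` edge cut of `△_q` and `{x,y}` is the edge
of `C` on the outermost boundary `B_q`, with `x` in the connected component of `σ` in
`△_q − C`, then `dist(σ,x) + dist(y,τ) = q` in `△_q − C`. -/
theorem tfractal_cut_distance_sum (q : ℕ) (C : Set (Sym2 (Fin (2 ^ q + 1))))
    (x y : Fin (2 ^ q + 1)) (hC : MinSTCut q C)
    (hxy : s(x, y) ∈ C) (hBq : s(x, y) ∈ boundaryB q q)
    (hx : ((TFractal q).deleteEdges C).Reachable (sigV q) x) :
    ((TFractal q).deleteEdges C).dist (sigV q) x +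
      ((TFractal q).deleteEdges C).dist y (tauV q) = q := by
  classical
  obtain ⟨a, b, heq, hdvd, hb⟩ := hBq
  have hb1 : b.val = a.val + 1 := by simpa using hb
  have hCeq : C = cutSet q a.val := minCut_eq_cutSet q C hC a b (heq ▸ hxy) hb1
  set m := a.val with hmdef
  have hm : m < 2^q := by have := b.isLt; omega
  rw [hCeq] at hx ⊢
  -- x = a and y = b
  have hxle : x.val ≤ m := reach_le q m _ (le_refl _) hx (by simp [sigV])
  have hxa : x = a ∧ y = b := by
    rw [Sym2.eq_iff] at heq
    rcases heq with h | ⟨h1, h2⟩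
    · exact h
    · exfalso
      have := congrArg Fin.val h1
      omega
  obtain ⟨rfl, rfl⟩ := hxa
  have hq1 : (2:ℕ)^q < 2^(q+1) := by
    rw [pow_succ]; have := Nat.two_pow_pos q; omega
  -- left distance = pc m
  have hdist1 : ((TFractal q).deleteEdges (cutSet q m)).dist (sigV q) x = pc m := by
    apply le_antisymm
    · obtain ⟨w, hw⟩ := walk_left q m hm m (le_refl _)
      have hxm : x = (⟨m, by omega⟩ : Fin (2^q+1)) := Fin.ext rfl
      rw [hxm]
      exact hw ▸ SimpleGraph.dist_le w
    · obtain ⟨w, hw⟩ := hx.exists_walk_length_eq_dist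
      have := phi_walk_le q m w (by simp [sigV])
      rw [hw] at this
      have h0 : phi q m (sigV q).val = 0 := by
        have : (sigV q).val = 0 := rfl
        rw [this, phi_zero]
      have hx' : phi q m x.val = pc m := by
        have : x.val = m := rfl
        rw [this, phi_self q m (by omega)]
      omega
  -- right distance = pc (2^q - 1 - m)
  have hrw : ∃ w : ((TFractal q).deleteEdges (cutSet q m)).Walk y (tauV q),
      w.length = pc (2^q - 1 - m) := by
    obtain ⟨w, hw⟩ := walk_right q m hm (2^q - (m+1)) (m+1) rfl (le_refl _) (by omega)
    have hym : y = (⟨m+1, by omega⟩ : Fin (2^q+1)) := Fin.ext hb1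
    rw [hym]
    refine ⟨w, ?_⟩
    rw [hw]
    congr 1
    omega
  have hdist2 : ((TFractal q).deleteEdges (cutSet q m)).dist y (tauV q)
      = pc (2^q - 1 - m) := by
    obtain ⟨w0, hw0⟩ := hrw
    apply le_antisymm
    · exact hw0 ▸ SimpleGraph.dist_le w0
    · have hreach : ((TFractal q).deleteEdges (cutSet q m)).Reachable y (tauV q) := ⟨w0⟩
      obtain ⟨w, hw⟩ := hreach.exists_walk_length_eq_dist
      have := psi_walk_le q m hm w (by omega)
      rw [hw] at this
      have hty : phi q (2^q-1-m) (2^q - y.val) = pc (2^q - 1 - m) := by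
        rw [hb1, show 2^q - (m+1) = 2^q - 1 - m by omega,
          phi_self q (2^q-1-m) (by omega)]
      have htt : phi q (2^q-1-m) (2^q - (tauV q).val) = 0 := by
        have : (tauV q).val = 2^q := rfl
        rw [this, Nat.sub_self, phi_zero]
      omega
  rw [hdist1, hdist2]
  exact pc_compl q m hm
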